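/- Let x, y ∈ E with y ≠ 0 and x·x̄ + y + ȳ = 0, and let n ∈ ℤ. Then α⁻ⁿ · n'(x, y) · α · β = n(−ϖⁿ·x̄·(ȳ)⁻¹, ϖ²ⁿ·y⁻¹) · h((ȳ)⁻¹) · α⁻⁽ⁿ⁺¹⁾ · n'(ϖ·x·(ȳ)⁻¹, ϖ²·y⁻¹). (This is the matrix identity underlying the computation of S_− f_n in Proposition 4.2.) -/

import Mathlib

open Matrix

lemma my_diagonal_zpow {m : Type*} [Fintype m] [DecidableEq m] {E : Type*} [Field E]
    (v : m → E) (hv : ∀ i, v i ≠ 0) (k : ℤ) :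
    (diagonal v : Matrix m m E) ^ k = diagonal (fun i => v i ^ k) := by
  cases k with
  | ofNat p =>
      rw [Int.ofNat_eq_coe, zpow_natCast, diagonal_pow]
      ext i j
      by_cases h : i = j <;> simp [diagonal, h, Pi.pow_apply]
  | negSucc p =>
      rw [zpow_negSucc, diagonal_pow]
      refine inv_eq_right_inv ?_
      rw [diagonal_mul_diagonal]
      ext i j
      by_cases h : i = j <;>
        simp [diagonal, h, one_apply, mul_inv_cancel₀ (pow_ne_zero (p + 1) (hv j))]

lemma diagonal_fin_three {E : Type*} [Field E] (a b c : E) :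
    (diagonal ![a, b, c] : Matrix (Fin 3) (Fin 3) E) = !![a, 0, 0; 0, b, 0; 0, 0, c] := by
  ext i j
  fin_cases i <;> fin_cases j <;> simp [diagonal] <;> rfl

set_option maxHeartbeats 1600000 in
/-- Let `y ≠ 0` with `x·σ(x) + y + σ(y) = 0` and let `n ∈ ℤ`. Then
`α⁻ⁿ · n'(x, y) · α · β
  = n(-ϖⁿ·σ(x)·σ(y)⁻¹, ϖ²ⁿ·y⁻¹) · h(σ(y)⁻¹) · α⁻⁽ⁿ⁺¹⁾ · n'(ϖ·x·σ(y)⁻¹, ϖ²·y⁻¹)`,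
where `α = diag(ϖ⁻¹, 1, ϖ)` for a fixed nonzero `ϖ` with `σ ϖ = ϖ`,
`n(x,y) = [[1, x, y], [0, 1, -σ x], [0, 0, 1]]`,
`n'(x,y) = [[1, 0, 0], [x, 1, 0], [y, -σ x, 1]]`,
`h(t) = diag(t, -σ(t)·t⁻¹, σ(t)⁻¹)` and `β` is the antidiagonal matrix of 1's.
(The matrix identity underlying the computation of `S₋ fₙ` in Proposition 4.2.) -/
theorem alpha_pow_lower_unipotent_alpha_beta {E : Type*} [Field E] (σ : E ≃+* E)
    (hσ : ∀ a : E, σ (σ a) = a) (ϖ : E) (hϖ : ϖ ≠ 0) (hϖσ : σ ϖ = ϖ)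
    (x y : E) (hy : y ≠ 0) (hxy : x * σ x + y + σ y = 0) (n : ℤ) :
    (diagonal ![ϖ⁻¹, 1, ϖ] : Matrix (Fin 3) (Fin 3) E) ^ (-n) *
        !![1, 0, 0; x, 1, 0; y, -σ x, 1] * diagonal ![ϖ⁻¹, 1, ϖ] *
        !![0, 0, 1; 0, 1, 0; 1, 0, 0] =
      !![1, -ϖ ^ n * σ x * (σ y)⁻¹, ϖ ^ (2 * n) * y⁻¹;
          0, 1, -σ (-ϖ ^ n * σ x * (σ y)⁻¹); 0, 0, 1] *
        diagonal ![(σ y)⁻¹, -σ ((σ y)⁻¹) * ((σ y)⁻¹)⁻¹, (σ ((σ y)⁻¹))⁻¹] *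
        (diagonal ![ϖ⁻¹, 1, ϖ] : Matrix (Fin 3) (Fin 3) E) ^ (-(n + 1)) *
        !![1, 0, 0; ϖ * x * (σ y)⁻¹, 1, 0;
            ϖ ^ 2 * y⁻¹, -σ (ϖ * x * (σ y)⁻¹), 1] := by
  have hσy : σ y ≠ 0 := fun h => hy (by simpa [hσ] using congrArg σ h)
  have hϖn : ϖ ^ n ≠ 0 := zpow_ne_zero _ hϖ
  have hv : ∀ i : Fin 3, (![ϖ⁻¹, 1, ϖ] : Fin 3 → E) i ≠ 0 := by
    intro i; fin_cases i <;> simp [hϖ]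
  rw [my_diagonal_zpow _ hv, my_diagonal_zpow _ hv]
  have e1 : (fun i => (![ϖ⁻¹, 1, ϖ] : Fin 3 → E) i ^ (-n))
      = ![ϖ ^ n, 1, ϖ ^ (-n)] := by
    funext i
    fin_cases i <;> simp [_root_.inv_zpow, _root_.zpow_neg]
  have e2 : (fun i => (![ϖ⁻¹, 1, ϖ] : Fin 3 → E) i ^ (-(n + 1)))
      = ![ϖ ^ (n + 1), 1, ϖ ^ (-(n + 1))] := by
    funext i
    fin_cases i <;> simp [_root_.inv_zpow, _root_.zpow_neg]
  have hϖm : ϖ ^ (n + 1) ≠ 0 := zpow_ne_zero _ hϖ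
  have hϖ2 : ϖ ^ (2 * n) ≠ 0 := zpow_ne_zero _ hϖ
  rw [e1, e2, _root_.diagonal_fin_three, _root_.diagonal_fin_three, _root_.diagonal_fin_three,
    _root_.diagonal_fin_three]
  simp only [_root_.map_mul, map_neg, map_inv₀, map_zpow₀, map_pow, hσ, hϖσ]
  simp only [Matrix.mul_fin_three, mul_zero, zero_mul, add_zero, zero_add, mul_one, one_mul,
    neg_mul, mul_neg, neg_neg, neg_zero, _root_.zpow_neg]
  have hA : ϖ ^ (1 + n) = ϖ ^ n * ϖ := by
    rw [zpow_add₀ hϖ, zpow_one, mul_comm]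
  have hB : ϖ ^ (n * 2) = ϖ ^ n * ϖ ^ n := by
    rw [show n * 2 = n + n by ring, zpow_add₀ hϖ]
  ext i j
  fin_cases i <;> fin_cases j <;>
    simp only [Matrix.cons_val', Matrix.cons_val_zero, Matrix.cons_val_one, Matrix.head_cons,
      Matrix.empty_val', Matrix.cons_val_fin_one, Matrix.head_fin_const, Fin.isValue,
      Matrix.of_apply, Matrix.cons_val_two, Matrix.tail_cons, Matrix.head_val',
        Fin.zero_eta, Fin.mk_one, Fin.reduceFinMk, Matrix.cons_val]
  all_goals try field_simp
  all_goals try ring_nf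
  all_goals simp only [hA, hB]
  all_goals try (left; trivial)
  all_goals try ring
  all_goals
    first
      | linear_combination (-((ϖ ^ n) ^ 2 * ϖ ^ 2 * y * σ y)) * hxy
      | linear_combination (y * ϖ ^ n * ϖ) * hxy
      | linear_combination (-((ϖ ^ n) ^ 2 * ϖ ^ 2)) * hxy
      | linear_combination (ϖ ^ n * ϖ) * hxy
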